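/- Let ε₁, ε₂ be real random variables on a probability space with E[ε₁] = E[ε₂] = 0, E[ε₁²] = E[ε₂²] = 1, E[ε₁ε₂] = 0, and finite fourth moments. Set k₁ = E[ε₁⁴] − 3, k₂ = E[ε₂⁴] − 3, c = E[ε₁²ε₂²] − 1, and let X₁ = ε₁, X₂ = ε₁ + ε₂, and R = X₁ − (1/2)·X₂. Then Cov(X₁², (X₂ − X₁)²) = c and Cov(X₂², R²) = (k₁ + k₂ − 2c)/4. Consequently, if k₁ > 0, k₂ > 0, c > 0 and c > (k₁ + k₂)/6, then |Cov(X₂², R²)| < |Cov(X₁², (X₂ − X₁)²)|. -/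

import Mathlib

open MeasureTheory

lemma stmt8_mul_mem2 {Ω : Type*} [MeasurableSpace Ω] {μ : Measure Ω} {f g : Ω → ℝ}
    (hf : MemLp f 4 μ) (hg : MemLp g 4 μ) : MemLp (fun ω => f ω * g ω) 2 μ := by
  have := hg.smul (φ := f) hf (r := 2) (hpqr := ⟨by
    symm
    rw [← two_mul, show (4:ENNReal) = 2*2 by norm_num,
      ENNReal.mul_inv (by norm_num) (by norm_num), ← mul_assoc,
      ENNReal.mul_inv_cancel (by norm_num) (by norm_num), one_mul]⟩)
  exact this

lemma stmt8_int_mul {Ω : Type*} [MeasurableSpace Ω] {μ : Measure Ω} {f g : Ω → ℝ}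
    (hf : MemLp f 2 μ) (hg : MemLp g 2 μ) : Integrable (fun ω => f ω * g ω) μ := by
  have := hg.smul (φ := f) hf (r := 1) (hpqr := ⟨by
    symm
    simp only [one_div, inv_one]
    exact ENNReal.inv_two_add_inv_two.symm⟩)
  rw [← memLp_one_iff_integrable]
  exact this

/-- Population failure of residual-based LiNGAM: in the model `X₁ = ε₁`, `X₂ = ε₁ + ε₂`
with `R = X₁ − (1/2)·X₂`, the dependence scores satisfy
`Cov(X₁², (X₂−X₁)²) = c` and `Cov(X₂², R²) = (k₁+k₂−2c)/4`; hence if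
`k₁, k₂, c > 0` and `c > (k₁+k₂)/6`, the incorrect variable `X₂` obtains the strictly
smaller score. -/
theorem stmt_8 {Ω : Type*} [MeasurableSpace Ω] (μ : Measure Ω)
    [IsProbabilityMeasure μ] (ε₁ ε₂ : Ω → ℝ)
    (h1meas : Measurable ε₁) (h2meas : Measurable ε₂)
    (h14 : MemLp ε₁ 4 μ) (h24 : MemLp ε₂ 4 μ)
    (hm1 : ∫ ω, ε₁ ω ∂μ = 0) (hm2 : ∫ ω, ε₂ ω ∂μ = 0)
    (hv1 : ∫ ω, ε₁ ω ^ 2 ∂μ = 1) (hv2 : ∫ ω, ε₂ ω ^ 2 ∂μ = 1)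
    (hcov : ∫ ω, ε₁ ω * ε₂ ω ∂μ = 0)
    (k₁ k₂ c : ℝ)
    (hk₁ : k₁ = (∫ ω, ε₁ ω ^ 4 ∂μ) - 3) (hk₂ : k₂ = (∫ ω, ε₂ ω ^ 4 ∂μ) - 3)
    (hc : c = (∫ ω, ε₁ ω ^ 2 * ε₂ ω ^ 2 ∂μ) - 1)
    (X₁ X₂ R : Ω → ℝ)
    (hX₁ : X₁ = ε₁) (hX₂ : X₂ = fun ω => ε₁ ω + ε₂ ω)
    (hR : R = fun ω => X₁ ω - (1 / 2) * X₂ ω) :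
    ((∫ ω, X₁ ω ^ 2 * (X₂ ω - X₁ ω) ^ 2 ∂μ) -
      (∫ ω, X₁ ω ^ 2 ∂μ) * (∫ ω, (X₂ ω - X₁ ω) ^ 2 ∂μ) = c) ∧
    ((∫ ω, X₂ ω ^ 2 * R ω ^ 2 ∂μ) -
      (∫ ω, X₂ ω ^ 2 ∂μ) * (∫ ω, R ω ^ 2 ∂μ) = (k₁ + k₂ - 2 * c) / 4) ∧
    (0 < k₁ → 0 < k₂ → 0 < c → (k₁ + k₂) / 6 < c →
      |(∫ ω, X₂ ω ^ 2 * R ω ^ 2 ∂μ) -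
        (∫ ω, X₂ ω ^ 2 ∂μ) * (∫ ω, R ω ^ 2 ∂μ)| <
      |(∫ ω, X₁ ω ^ 2 * (X₂ ω - X₁ ω) ^ 2 ∂μ) -
        (∫ ω, X₁ ω ^ 2 ∂μ) * (∫ ω, (X₂ ω - X₁ ω) ^ 2 ∂μ)|) := by
  simp only [hX₁, hX₂, hR]
  clear hX₁ hX₂ hR
  beta_reduce
  -- membership facts
  have h12 : MemLp ε₁ 2 μ := h14.mono_exponent (by norm_num)
  have h22 : MemLp ε₂ 2 μ := h24.mono_exponent (by norm_num)
  have hs1 : MemLp (fun ω => ε₁ ω * ε₁ ω) 2 μ := stmt8_mul_mem2 h14 h14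
  have hs2 : MemLp (fun ω => ε₂ ω * ε₂ ω) 2 μ := stmt8_mul_mem2 h24 h24
  -- integrability facts
  have A1 : Integrable (fun ω => ε₁ ω ^ 2) μ := h12.integrable_sq
  have A2 : Integrable (fun ω => ε₂ ω ^ 2) μ := h22.integrable_sq
  have B : Integrable (fun ω => ε₁ ω * ε₂ ω) μ := stmt8_int_mul h12 h22
  have Q1 : Integrable (fun ω => ε₁ ω ^ 4) μ := by
    have := stmt8_int_mul hs1 hs1
    simpa [show ∀ x : ℝ, x * x * (x * x) = x ^ 4 from fun x => by ring] using this
  have Q2 : Integrable (fun ω => ε₂ ω ^ 4) μ := by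
    have := stmt8_int_mul hs2 hs2
    simpa [show ∀ x : ℝ, x * x * (x * x) = x ^ 4 from fun x => by ring] using this
  have Q22 : Integrable (fun ω => ε₁ ω ^ 2 * ε₂ ω ^ 2) μ := by
    have := stmt8_int_mul hs1 hs2
    simpa [show ∀ x y : ℝ, x * x * (y * y) = x ^ 2 * y ^ 2 from fun x y => by ring] using this
  -- key integral computations
  have I1 : (∫ ω, ε₁ ω ^ 2 * (ε₁ ω + ε₂ ω - ε₁ ω) ^ 2 ∂μ)
      = ∫ ω, ε₁ ω ^ 2 * ε₂ ω ^ 2 ∂μ := by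
    congr 1; funext ω; ring
  have I2 : (∫ ω, (ε₁ ω + ε₂ ω - ε₁ ω) ^ 2 ∂μ) = 1 := by
    rw [show (fun ω => (ε₁ ω + ε₂ ω - ε₁ ω) ^ 2) = fun ω => ε₂ ω ^ 2 from
      by funext ω; ring]
    exact hv2
  have IX2 : (∫ ω, (ε₁ ω + ε₂ ω) ^ 2 ∂μ) = 2 := by
    have hi1 : Integrable (fun ω => 2 * (ε₁ ω * ε₂ ω)) μ := B.const_mul 2
    have hi2 : Integrable (fun ω => 2 * (ε₁ ω * ε₂ ω) + ε₂ ω ^ 2) μ := hi1.add A2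
    rw [show (fun ω => (ε₁ ω + ε₂ ω) ^ 2)
        = fun ω => ε₁ ω ^ 2 + (2 * (ε₁ ω * ε₂ ω) + ε₂ ω ^ 2) from by funext ω; ring,
      integral_add A1 hi2, integral_add hi1 A2, integral_const_mul, hv1, hv2, hcov]
    ring
  have IR : (∫ ω, (ε₁ ω - 1 / 2 * (ε₁ ω + ε₂ ω)) ^ 2 ∂μ) = 1 / 2 := by
    have hi0 : Integrable (fun ω => (1/4 : ℝ) * ε₁ ω ^ 2) μ := A1.const_mul _
    have hi1 : Integrable (fun ω => (-1/2 : ℝ) * (ε₁ ω * ε₂ ω)) μ := B.const_mul _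
    have hi3 : Integrable (fun ω => (1/4 : ℝ) * ε₂ ω ^ 2) μ := A2.const_mul _
    have hi2 : Integrable (fun ω => (-1/2 : ℝ) * (ε₁ ω * ε₂ ω) + (1/4 : ℝ) * ε₂ ω ^ 2) μ :=
      hi1.add hi3
    rw [show (fun ω => (ε₁ ω - 1 / 2 * (ε₁ ω + ε₂ ω)) ^ 2)
        = fun ω => (1/4 : ℝ) * ε₁ ω ^ 2 + ((-1/2 : ℝ) * (ε₁ ω * ε₂ ω) + (1/4 : ℝ) * ε₂ ω ^ 2)
        from by funext ω; ring,
      integral_add hi0 hi2, integral_add hi1 hi3, integral_const_mul, integral_const_mul,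
      integral_const_mul, hv1, hv2, hcov]
    ring
  have IXR : (∫ ω, (ε₁ ω + ε₂ ω) ^ 2 * (ε₁ ω - 1 / 2 * (ε₁ ω + ε₂ ω)) ^ 2 ∂μ)
      = ((∫ ω, ε₁ ω ^ 4 ∂μ) + (∫ ω, ε₂ ω ^ 4 ∂μ) - 2 * (∫ ω, ε₁ ω ^ 2 * ε₂ ω ^ 2 ∂μ)) / 4 := by
    have hi0 : Integrable (fun ω => (1/4 : ℝ) * ε₁ ω ^ 4) μ := Q1.const_mul _
    have hi1 : Integrable (fun ω => (-1/2 : ℝ) * (ε₁ ω ^ 2 * ε₂ ω ^ 2)) μ := Q22.const_mul _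
    have hi3 : Integrable (fun ω => (1/4 : ℝ) * ε₂ ω ^ 4) μ := Q2.const_mul _
    have hi2 : Integrable
        (fun ω => (-1/2 : ℝ) * (ε₁ ω ^ 2 * ε₂ ω ^ 2) + (1/4 : ℝ) * ε₂ ω ^ 4) μ := hi1.add hi3
    rw [show (fun ω => (ε₁ ω + ε₂ ω) ^ 2 * (ε₁ ω - 1 / 2 * (ε₁ ω + ε₂ ω)) ^ 2)
        = fun ω => (1/4 : ℝ) * ε₁ ω ^ 4
            + ((-1/2 : ℝ) * (ε₁ ω ^ 2 * ε₂ ω ^ 2) + (1/4 : ℝ) * ε₂ ω ^ 4)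
        from by funext ω; ring,
      integral_add hi0 hi2, integral_add hi1 hi3, integral_const_mul, integral_const_mul,
      integral_const_mul]
    ring
  have e1 : (∫ ω, ε₁ ω ^ 2 * (ε₁ ω + ε₂ ω - ε₁ ω) ^ 2 ∂μ) -
      (∫ ω, ε₁ ω ^ 2 ∂μ) * (∫ ω, (ε₁ ω + ε₂ ω - ε₁ ω) ^ 2 ∂μ) = c := by
    rw [I1, I2, hv1, hc]; ring
  have e2 : (∫ ω, (ε₁ ω + ε₂ ω) ^ 2 * (ε₁ ω - 1 / 2 * (ε₁ ω + ε₂ ω)) ^ 2 ∂μ) -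
      (∫ ω, (ε₁ ω + ε₂ ω) ^ 2 ∂μ) * (∫ ω, (ε₁ ω - 1 / 2 * (ε₁ ω + ε₂ ω)) ^ 2 ∂μ)
      = (k₁ + k₂ - 2 * c) / 4 := by
    rw [IXR, IX2, IR, hk₁, hk₂, hc]; ring
  refine ⟨e1, e2, fun hk1p hk2p hcp hgap => ?_⟩
  rw [e1, e2, abs_of_pos hcp, abs_lt]
  constructor <;> linarith
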